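/- Let n ≥ 1 and let F be a set of elements of F_d all of reduced-word length n such that the function r := Σ_{w ∈ F} p[w] is constant on each equivalence class of R_S (i.e. r(x) = r(y) whenever (x, y) ∈ R_S). For w ∈ F_d \ {e} with syllable decomposition w = s_{i(1)}^{n(1)} ⋯ s_{i(k)}^{n(k)} (where s_{i(j)} ∈ S, the n(j) are nonzero integers, and s_{i(j)} ≠ s_{i(j+1)} for all j), set ŵ := s_{i(1)}^{n(1)} ⋯ s_{i(k-1)}^{n(k-1)} s_{i(k)}^{-n(k)}. Then w ∈ F implies ŵ ∈ F. -/

import Mathlib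

/-- The alphabet of the free group on `d` generators: a generator together with
a sign (`true` = the generator itself, `false` = its inverse). -/
abbrev Letter (d : ℕ) := Fin d × Bool

/-- The inverse of a letter. -/
def Letter.inv {d : ℕ} (a : Letter d) : Letter d := (a.1, !a.2)

/-- A sequence of letters is reduced if no letter is followed by its inverse. -/
def IsReducedSeq {d : ℕ} (x : ℕ → Letter d) : Prop :=
  ∀ n, x (n + 1) ≠ Letter.inv (x n)

/-- The boundary `∂F_d` of the free group on `d` generators: the space of
infinite reduced words, topologized as a subspace of the product space
`(Fin d × Bool)^ℕ` (each factor discrete). -/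
abbrev Boundary (d : ℕ) := {x : ℕ → Letter d // IsReducedSeq x}

/-- The number of letters cancelled at the junction when the (finite reduced)
word `u` is concatenated with the infinite reduced word `x`. -/
def cancelLen {d : ℕ} (u : List (Letter d)) (x : ℕ → Letter d) : ℕ :=
  Nat.findGreatest (fun k => ∀ i < k, u[u.length - 1 - i]? = some (Letter.inv (x i))) u.length

/-- The reduction of the concatenation of a finite reduced word `u` with an
infinite reduced word `x`. -/
def concatReduce {d : ℕ} (u : List (Letter d)) (x : ℕ → Letter d) : ℕ → Letter d :=
  fun n =>
    let k := cancelLen u x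
    let m := u.length - k
    if h : n < m then u[n]'(by omega) else x (k + (n - m))

open Classical in
/-- The boundary action of the free group on its boundary: left multiplication
followed by free reduction.  (The `if` always takes the `then` branch, since the
reduction of the concatenation of reduced words is again reduced; hence this is
exactly the usual boundary action `g · x`.) -/
noncomputable def boundaryAct {d : ℕ} (g : FreeGroup (Fin d)) (x : Boundary d) : Boundary d :=
  if h : IsReducedSeq (concatReduce (FreeGroup.toWord g) x.1) then
    ⟨concatReduce (FreeGroup.toWord g) x.1, h⟩
  else x

/-- `x` is the boundary point `w^{+∞}`, the limit of the sequence `(wⁿ)ₙ₌₁^∞`: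
for every `k` there is `N` such that for all `n ≥ N` the reduced word of `wⁿ`
has length at least `k` and its first `k` letters agree with those of `x`.
The point `w^{-∞}` is `(w⁻¹)^{+∞}`, i.e. `IsPlusLimit w⁻¹`. -/
def IsPlusLimit {d : ℕ} (w : FreeGroup (Fin d)) (x : Boundary d) : Prop :=
  ∀ k : ℕ, ∃ N : ℕ, ∀ n ≥ N,
    k ≤ (FreeGroup.toWord (w ^ n)).length ∧
    ∀ i < k, (FreeGroup.toWord (w ^ n))[i]? = some (x.1 i)

/-- The relation `R_W = Δ ∪ {(g·w^{+∞}, g·w^{-∞}) : g ∈ F_d, w ∈ W ∪ W⁻¹}`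
on the boundary `∂F_d`. -/
def RW {d : ℕ} (W : Set (FreeGroup (Fin d))) : Set (Boundary d × Boundary d) :=
  {p | p.1 = p.2} ∪
  {p | ∃ (g w : FreeGroup (Fin d)) (xp xm : Boundary d),
      (w ∈ W ∨ w⁻¹ ∈ W) ∧ IsPlusLimit w xp ∧ IsPlusLimit w⁻¹ xm ∧
      p.1 = boundaryAct g xp ∧ p.2 = boundaryAct g xm}

open Classical in
/-- `p[w]` : the (`ℤ`-valued) indicator function of the cylinder set of the
reduced word of `w` in the boundary. -/
noncomputable def pFun {d : ℕ} (w : FreeGroup (Fin d)) : Boundary d → ℤ :=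
  fun x =>
    if ∀ i < (FreeGroup.toWord w).length, (FreeGroup.toWord w)[i]? = some (x.1 i) then 1 else 0

/-- `q[s] = p[s] + p[s⁻¹]` for a generator `s`. -/
noncomputable def qFun {d : ℕ} (s : Fin d) : Boundary d → ℤ :=
  fun x => pFun (FreeGroup.of s) x + pFun (FreeGroup.of s)⁻¹ x

/-- `q[sⁿ] = p[sⁿ] + p[s⁻ⁿ]` for a generator `s`. -/
noncomputable def qPow {d : ℕ} (s : Fin d) (n : ℕ) : Boundary d → ℤ :=
  fun x => pFun (FreeGroup.of s ^ n) x + pFun ((FreeGroup.of s ^ n)⁻¹) x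

/-- The map `w ↦ ŵ` flipping the sign of the exponent of the last syllable of
the reduced word of `w`: if `w = s_{i(1)}^{n(1)} ⋯ s_{i(k)}^{n(k)}` then
`ŵ = s_{i(1)}^{n(1)} ⋯ s_{i(k-1)}^{n(k-1)} s_{i(k)}^{-n(k)}`.  (The final
syllable is the maximal terminal run of equal letters of the reduced word.) -/
def hatWord {d : ℕ} (w : FreeGroup (Fin d)) : FreeGroup (Fin d) :=
  match (FreeGroup.toWord w).reverse with
  | [] => w
  | a :: _ =>
    let k := ((FreeGroup.toWord w).reverse.takeWhile (fun b => b == a)).length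
    FreeGroup.mk ((FreeGroup.toWord w).take ((FreeGroup.toWord w).length - k) ++
      List.replicate k (Letter.inv a))

@[simp] lemma Letter.inv_inv {d : ℕ} (a : Letter d) : a.inv.inv = a := by
  simp [Letter.inv]

lemma Letter.ne_inv_self {d : ℕ} (a : Letter d) : a ≠ a.inv := by
  intro h
  have := congrArg Prod.snd h
  simp [Letter.inv] at this

lemma Letter.inv_injective {d : ℕ} : Function.Injective (Letter.inv (d := d)) :=
  Function.Involutive.injective (fun a => Letter.inv_inv a)

lemma head?_replicate_of_pos {α} {k : ℕ} (hk : 1 ≤ k) (a : α) :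
    (List.replicate k a).head? = some a := by
  cases k with
  | zero => omega
  | succ k' => simp [List.replicate_succ]

lemma Letter.ne_inv_comm {d : ℕ} {a b : Letter d} (h : a ≠ b.inv) : b ≠ a.inv := by
  intro hb; apply h; rw [hb]; simp

abbrev RedList {d : ℕ} (L : List (Letter d)) : Prop :=
  List.Chain' (fun a b => b ≠ Letter.inv a) L

lemma reduce_eq_self {d : ℕ} {L : List (Letter d)} (h : RedList L) :
    FreeGroup.reduce L = L := by
  induction L with
  | nil => rfl
  | cons a L ih =>
    rw [RedList, List.Chain', List.isChain_cons] at h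
    rw [FreeGroup.reduce.cons, ih h.2]
    cases L with
    | nil => rfl
    | cons b t =>
      have hb : b ≠ Letter.inv a := h.1 b rfl
      have : ¬ (a.1 = b.1 ∧ a.2 = !b.2) := by
        rintro ⟨h1, h2⟩
        apply hb
        apply Prod.ext
        · simp [Letter.inv, h1]
        · show b.2 = !a.2
          rw [h2, Bool.not_not]
      simp [this]

lemma redList_toWord {d : ℕ} (w : FreeGroup (Fin d)) : RedList (FreeGroup.toWord w) := by
  rw [RedList, List.Chain', List.isChain_iff_getElem]
  intro i hi
  by_contra hc
  set L := FreeGroup.toWord w with hL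
  have hlen : i + 1 < L.length := by omega
  have hc' : L.get ⟨i+1, by omega⟩ = Letter.inv (L.get ⟨i, by omega⟩) := hc
  set a := L.get ⟨i, by omega⟩ with ha
  have hdecomp : L = L.take i ++ (a.1, a.2) :: (a.1, !a.2) :: L.drop (i+2) := by
    have h1 : L.drop i = a :: L.drop (i+1) := by
      rw [List.drop_eq_getElem_cons (show i < L.length by omega)]
      simp [ha]
    have h2 : L.drop (i+1) = L.get ⟨i+1, by omega⟩ :: L.drop (i+2) := by
      rw [List.drop_eq_getElem_cons (show i + 1 < L.length by omega)]
      simp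
    conv_lhs => rw [← List.take_append_drop i L, h1, h2]
    rw [hc']
    rfl
  exact FreeGroup.reduce.not ((FreeGroup.reduce_toWord w).trans hdecomp)

lemma getElem_idx_congr {α} (l : List α) {i j : ℕ} (hi : i < l.length) (h : i = j) :
    l[i] = l[j]'(h ▸ hi) := by subst h; rfl

lemma takeWhile_maximal {α} (P : α → Bool) :
    ∀ (l : List α) (h : (l.takeWhile P).length < l.length),
      ¬ P (l[(l.takeWhile P).length]'h) := by
  intro l
  induction l with
  | nil => intro h; simp at h
  | cons a t ih =>
    intro h
    by_cases hP : P a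
    · simp only [List.takeWhile_cons_of_pos hP] at h ⊢
      simpa using ih (by simpa using h)
    · simp only [List.takeWhile_cons_of_neg hP] at h ⊢
      simpa using hP

/-- The boundary point which is the constant sequence at `a`. -/
def constB {d : ℕ} (a : Letter d) : Boundary d :=
  ⟨fun _ => a, fun _ => (Letter.ne_inv_self a)⟩

lemma mk_singleton_pow {d : ℕ} (a : Letter d) (m : ℕ) :
    FreeGroup.mk [a] ^ m = FreeGroup.mk (List.replicate m a) := by
  induction m with
  | zero => rw [pow_zero, List.replicate_zero, FreeGroup.one_eq_mk]
  | succ m ih => rw [pow_succ, ih, FreeGroup.mul_mk, ← List.replicate_succ']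

lemma isPlusLimit_const {d : ℕ} (a : Letter d) :
    IsPlusLimit (FreeGroup.mk [a]) (constB a) := by
  intro k
  refine ⟨k, fun m hm => ?_⟩
  rw [mk_singleton_pow, FreeGroup.toWord_mk, FreeGroup.reduce_replicate]
  refine ⟨by simpa using hm, fun i hik => ?_⟩
  rw [List.getElem?_replicate, if_pos (by omega)]
  rfl

/-- The concatenation of a finite word with an infinite word, no reduction. -/
def appendSeq {d : ℕ} (u : List (Letter d)) (x : ℕ → Letter d) : ℕ → Letter d :=
  fun n => if h : n < u.length then u[n] else x (n - u.length)

lemma cancelLen_eq_zero {d : ℕ} {u : List (Letter d)} {x : ℕ → Letter d}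
    (h : ∀ (hne : u ≠ []), x 0 ≠ Letter.inv (u.getLast hne)) : cancelLen u x = 0 := by
  rw [cancelLen, Nat.findGreatest_eq_zero_iff]
  intro m hm hmle hP
  have hne : u ≠ [] := by
    intro h0
    rw [h0] at hmle; simp at hmle; omega
  have h0 := hP 0 hm
  rw [List.getElem?_eq_getElem (by have := List.length_pos_iff.mpr hne; omega)] at h0
  have hlast : u.getLast hne = u[u.length - 1]'(by have := List.length_pos_iff.mpr hne; omega) :=
    List.getLast_eq_getElem hne
  have : u.getLast hne = Letter.inv (x 0) := by
    rw [hlast]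
    exact Option.some_injective _ h0
  exact h hne (by rw [this, Letter.inv_inv])

lemma appendSeq_reduced {d : ℕ} {u : List (Letter d)} (hu : RedList u) (x : Boundary d)
    (hj : ∀ (hne : u ≠ []), x.1 0 ≠ Letter.inv (u.getLast hne)) :
    IsReducedSeq (appendSeq u x.1) := by
  intro m
  unfold appendSeq
  by_cases h1 : m + 1 < u.length
  · rw [dif_pos h1, dif_pos (by omega)]
    rw [RedList, List.Chain', List.isChain_iff_getElem] at hu
    exact hu m (by omega)
  · by_cases h2 : m < u.length
    · have hne : u ≠ [] := by intro h0; rw [h0] at h2; simp at h2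
      rw [dif_neg h1, dif_pos h2]
      have hm : m = u.length - 1 := by omega
      subst hm
      rw [show u.length - 1 + 1 - u.length = 0 from by omega]
      have := hj hne
      rwa [List.getLast_eq_getElem hne] at this
    · rw [dif_neg h1, dif_neg h2]
      have : m + 1 - u.length = (m - u.length) + 1 := by omega
      rw [this]
      exact x.2 (m - u.length)

lemma boundaryAct_mk {d : ℕ} {u : List (Letter d)} (hu : RedList u) (x : Boundary d)
    (hj : ∀ (hne : u ≠ []), x.1 0 ≠ Letter.inv (u.getLast hne)) :
    boundaryAct (FreeGroup.mk u) x = ⟨appendSeq u x.1, appendSeq_reduced hu x hj⟩ := by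
  have htw : FreeGroup.toWord (FreeGroup.mk u) = u := by
    rw [FreeGroup.toWord_mk, reduce_eq_self hu]
  have hc0 : cancelLen u x.1 = 0 := cancelLen_eq_zero hj
  have hcr : concatReduce u x.1 = appendSeq u x.1 := by
    funext m
    simp only [concatReduce, hc0, appendSeq, Nat.sub_zero, Nat.zero_add]
  rw [boundaryAct, htw, hcr, dif_pos (appendSeq_reduced hu x hj)]

/-- Let `n ≥ 1` and let `F` be a set of elements of `F_d` of
reduced-word length `n` such that `r = Σ_{w ∈ F} p[w]` is constant on each
equivalence class of `R_S`.  Then `w ∈ F` implies `ŵ ∈ F`. -/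
theorem hat_mem_of_sum_constant (d : ℕ) (hd : 2 ≤ d) (n : ℕ) (hn : 1 ≤ n)
    (F : Finset (FreeGroup (Fin d)))
    (hF : ∀ w ∈ F, (FreeGroup.toWord w).length = n)
    (hconst : ∀ x y : Boundary d,
      (x, y) ∈ RW (Set.range (FreeGroup.of : Fin d → FreeGroup (Fin d))) →
      ∑ w ∈ F, pFun w x = ∑ w ∈ F, pFun w y) :
    ∀ w ∈ F, hatWord w ∈ F := by
  classical
  intro w hw
  set u := FreeGroup.toWord w with hu
  have hulen : u.length = n := hF w hw
  have huchain : RedList u := redList_toWord w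
  have hune : u ≠ [] := by
    intro h0; rw [h0] at hulen; simp at hulen; omega
  have hrne : u.reverse ≠ [] := by simpa using hune
  obtain ⟨a, t, hrev⟩ := List.exists_cons_of_ne_nil hrne
  set k := (u.reverse.takeWhile (fun b => b == a)).length with hk
  have hkn : k ≤ n := by
    have := (List.takeWhile_prefix (l := u.reverse) (fun b => b == a)).length_le
    rw [List.length_reverse, hulen] at this
    exact this
  have hk1 : 1 ≤ k := by
    rw [hk, hrev, List.takeWhile_cons_of_pos (by simp)]
    simp
  -- the terminal run of `u` consists of copies of `a`
  have hrevrun : ∀ j (hj : j < u.reverse.length), j < k → u.reverse[j] = a := by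
    intro j hj hjk
    have h1 : (u.reverse.takeWhile (fun b => b == a))[j]'(by omega) = u.reverse[j] :=
      (List.takeWhile_prefix _).getElem (by omega)
    have h2 := List.mem_takeWhile_imp
      (List.getElem_mem (l := u.reverse.takeWhile (fun b => b == a)) (n := j) (by omega))
    rw [h1] at h2
    simpa using h2
  have hrun : ∀ i (hi : i < u.length), n - k ≤ i → u[i] = a := by
    intro i hi hik
    have hj : n - 1 - i < u.reverse.length := by simp [hulen]; omega
    have := hrevrun (n - 1 - i) hj (by omega)
    rw [List.getElem_reverse] at this
    have hidx : u.length - 1 - (n - 1 - i) = i := by omega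
    rwa [getElem_idx_congr u (by omega) hidx] at this
  have hmax : ∀ (hkn' : k < n), u[n - 1 - k]'(by omega) ≠ a := by
    intro hkn' hcon
    have hklt : k < u.reverse.length := by simp [hulen]; omega
    have := takeWhile_maximal (fun b => b == a) u.reverse hklt
    rw [List.getElem_reverse] at this
    have hidx : u.length - 1 - k = n - 1 - k := by omega
    rw [getElem_idx_congr u (by omega) hidx] at this
    simp [hcon] at this
  -- the prefix before the terminal run
  set m := n - k with hm
  set p := u.take m with hp
  have hplen : p.length = m := by
    rw [hp, List.length_take]; omega
  have hpchain : RedList p := huchain.take m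
  have hpget : ∀ i (hi : i < m), p[i]'(by omega) = u[i]'(by omega) := by
    intro i hi
    exact List.getElem_take
  have hplast : ∀ (hne : p ≠ []), p.getLast hne = u[m - 1]'(by omega) := by
    intro hne
    have h1 : 1 ≤ m := by
      have := List.length_pos_iff.mpr hne; omega
    rw [List.getLast_eq_getElem hne, getElem_idx_congr p (by omega) (show p.length - 1 = m - 1 by omega)]
    exact hpget (m - 1) (by omega)
  have hm1 : ∀ (h1 : 1 ≤ m), u[m - 1]'(by omega) ≠ a := by
    intro h1
    have hidx : m - 1 = n - 1 - k := by omega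
    rw [getElem_idx_congr u (by omega) hidx]
    exact hmax (by omega)
  have hma : ∀ (h1 : 1 ≤ m), a ≠ Letter.inv (u[m - 1]'(by omega)) := by
    intro h1
    have := List.isChain_iff_getElem.mp huchain (m - 1) (by omega)
    have hma' : u[m - 1 + 1]'(by omega) = a := by
      have := hrun (m - 1 + 1) (by omega) (by omega)
      simpa using this
    rw [hma'] at this
    simpa using this
  -- the hat word
  set L' := p ++ List.replicate k (Letter.inv a) with hL'
  have hL'len : L'.length = n := by
    rw [hL', List.length_append, hplen, List.length_replicate]; omega
  have hL'chain : RedList L' := by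
    rw [hL', RedList, List.Chain', List.isChain_append]
    refine ⟨hpchain, List.isChain_replicate_of_rel k ?_, ?_⟩
    · rw [Letter.inv_inv]
      exact (Letter.ne_inv_self a).symm
    · intro z hz y hy
      have hne : p ≠ [] := by
        intro h0; rw [h0] at hz; simp at hz
      have h1 : 1 ≤ m := by have := List.length_pos_iff.mpr hne; omega
      rw [List.getLast?_eq_getLast hne] at hz
      have hzval : z = u[m - 1]'(by omega) := by
        have h2 := hplast hne
        simp only [Option.mem_def, Option.some.injEq] at hz
        rw [← hz, h2]
      have hyval : y = Letter.inv a := by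
        rw [head?_replicate_of_pos hk1] at hy
        exact (by simpa using hy : Letter.inv a = y).symm
      rw [hzval, hyval]
      intro hcon
      exact hm1 h1 (Letter.inv_injective hcon).symm
  have htwL' : FreeGroup.toWord (FreeGroup.mk L') = L' := by
    rw [FreeGroup.toWord_mk, reduce_eq_self hL'chain]
  have hhat : hatWord w = FreeGroup.mk L' := by
    have hk2 : ((a :: t).takeWhile (fun b => b == a)).length = k := by rw [hk, hrev]
    unfold hatWord
    rw [← hu, hrev]
    dsimp only
    rw [hk2, hulen]
  -- the two boundary points
  have hjx : ∀ (hne : p ≠ []), (constB a).1 0 ≠ Letter.inv (p.getLast hne) := by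
    intro hne
    have h1 : 1 ≤ m := by have := List.length_pos_iff.mpr hne; omega
    rw [hplast hne]
    exact hma h1
  have hjy : ∀ (hne : p ≠ []), (constB (Letter.inv a)).1 0 ≠ Letter.inv (p.getLast hne) := by
    intro hne
    have h1 : 1 ≤ m := by have := List.length_pos_iff.mpr hne; omega
    rw [hplast hne]
    intro hcon
    exact hm1 h1 (Letter.inv_injective hcon).symm
  set x := boundaryAct (FreeGroup.mk p) (constB a) with hx
  set y := boundaryAct (FreeGroup.mk p) (constB (Letter.inv a)) with hy
  have hxy : (x, y) ∈ RW (Set.range (FreeGroup.of : Fin d → FreeGroup (Fin d))) := by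
    right
    refine ⟨FreeGroup.mk p, FreeGroup.mk [a], constB a, constB (Letter.inv a), ?_,
      isPlusLimit_const a, ?_, rfl, rfl⟩
    · obtain ⟨s, b⟩ := a
      cases b
      · right
        refine ⟨s, ?_⟩
        rw [FreeGroup.inv_mk]
        have : FreeGroup.invRev [((s : Fin d), false)] = [(s, true)] := by
          simp [FreeGroup.invRev]
        rw [this]
        rfl
      · exact Or.inl ⟨s, rfl⟩
    · rw [FreeGroup.inv_mk]
      have : FreeGroup.invRev [a] = [Letter.inv a] := by
        simp [FreeGroup.invRev, Letter.inv]
      rw [this]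
      exact isPlusLimit_const _
  have hxval : x = ⟨appendSeq p (constB a).1, appendSeq_reduced hpchain _ hjx⟩ :=
    boundaryAct_mk hpchain _ hjx
  have hyval : y = ⟨appendSeq p (constB (Letter.inv a)).1, appendSeq_reduced hpchain _ hjy⟩ :=
    boundaryAct_mk hpchain _ hjy
  -- the prefix of x is the reduced word of w
  have hxpre : ∀ i (hi : i < u.length), x.1 i = u[i] := by
    intro i hi
    rw [hxval]
    show appendSeq p (fun _ => a) i = u[i]
    unfold appendSeq
    by_cases h : i < p.length
    · rw [dif_pos h, hpget i (by omega)]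
    · rw [dif_neg h]
      exact (hrun i hi (by omega)).symm
  -- the prefix of y is the reduced word of the hat word
  have hypre : ∀ i (hi : i < n), y.1 i = L'[i]'(by omega) := by
    intro i hi
    rw [hyval]
    show appendSeq p (fun _ => Letter.inv a) i = L'[i]'(by omega)
    unfold appendSeq
    by_cases h : i < p.length
    · have h2 : L'[i]'(by omega) = p[i]'h := List.getElem_append_left h
      rw [dif_pos h, h2]
    · have h2 : L'[i]'(by omega) = Letter.inv a := by
        have h3 := List.getElem_append_right (as := p) (bs := List.replicate k (Letter.inv a))
          (i := i) (h₁ := by omega) (h₂ := by simp [hplen]; omega)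
        rw [List.getElem_replicate] at h3
        exact h3
      rw [dif_neg h, h2]
  -- evaluating the sums
  have hsum1 : ∑ v ∈ F, pFun v x = 1 := by
    have hcong : ∀ v ∈ F, pFun v x = if v = w then 1 else 0 := by
      intro v hv
      rw [pFun]
      by_cases hvw : v = w
      · subst hvw
        rw [if_pos rfl, if_pos]
        intro i hi
        rw [← hu] at hi ⊢
        rw [List.getElem?_eq_getElem hi, hxpre i hi]
      · rw [if_neg hvw, if_neg]
        intro hcond
        apply hvw
        apply FreeGroup.toWord_injective
        rw [← hu]
        apply List.ext_getElem (by rw [hF v hv, hulen])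
        intro i h1 h2
        have := hcond i h1
        rw [List.getElem?_eq_getElem h1, hxpre i h2] at this
        exact Option.some_injective _ this
    rw [Finset.sum_congr rfl hcong, Finset.sum_ite_eq' F w (fun _ => (1 : ℤ)), if_pos hw]
  have hsum2 : ∑ v ∈ F, pFun v y = if hatWord w ∈ F then 1 else 0 := by
    have hcong : ∀ v ∈ F, pFun v y = if v = hatWord w then 1 else 0 := by
      intro v hv
      rw [pFun]
      by_cases hvw : v = hatWord w
      · subst hvw
        rw [if_pos rfl, if_pos]
        rw [hhat, htwL']
        intro i hi
        rw [List.getElem?_eq_getElem hi, hypre i (by omega)]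
      · rw [if_neg hvw, if_neg]
        intro hcond
        apply hvw
        rw [hhat, ← FreeGroup.mk_toWord (x := v)]
        congr 1
        apply List.ext_getElem (by rw [hF v hv, ← htwL', FreeGroup.toWord_mk, reduce_eq_self hL'chain, hL'len])
        intro i h1 h2
        have := hcond i h1
        rw [List.getElem?_eq_getElem h1, hypre i (by rw [hF v hv] at h1; omega)] at this
        exact Option.some_injective _ this
    rw [Finset.sum_congr rfl hcong, Finset.sum_ite_eq' F (hatWord w) (fun _ => (1 : ℤ))]
  have hfinal := hconst x y hxy
  rw [hsum1, hsum2] at hfinal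
  by_contra hno
  rw [if_neg hno] at hfinal
  norm_num at hfinal
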